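/- Let A be a commutative ring, a an ideal generated by x_1,...,x_n, and suppose H_1(x_1,...,x_n; A) = 0 where A is noetherian local and x_1,...,x_n ∈ m. Then x_1,...,x_n is an A-regular sequence. -/

import Mathlib

noncomputable section

/-- The degree-one part `E₁ = ⊕_{i ∈ ι} A·eᵢ` of the Koszul complex on a family indexed
by `ι` (a wrapper around `ι →₀ A`). -/
def KE1 (ι A : Type) [CommRing A] : Type := ι →₀ A

instance (ι A : Type) [CommRing A] : AddCommGroup (KE1 ι A) :=
  inferInstanceAs (AddCommGroup (ι →₀ A))

instance (ι A : Type) [CommRing A] : Module A (KE1 ι A) :=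
  inferInstanceAs (Module A (ι →₀ A))

/-- First differential of the Koszul complex on the family `x`: `eᵢ ↦ xᵢ`. -/
def koszulD1 {A : Type} [CommRing A] {ι : Type} (x : ι → A) : KE1 ι A →ₗ[A] A :=
  Finsupp.linearCombination A x

/-- The `1`-cycles of the Koszul complex on `x`. -/
def koszulZ1 {A : Type} [CommRing A] {ι : Type} (x : ι → A) : Submodule A (KE1 ι A) :=
  LinearMap.ker (koszulD1 x)

/-- The `1`-boundaries of the Koszul complex on `x`: the image of
`d₂ : Λ² → E₁`, `eᵢ ∧ eⱼ ↦ xᵢ eⱼ - xⱼ eᵢ`. -/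
def koszulB1 {A : Type} [CommRing A] {ι : Type} (x : ι → A) : Submodule A (KE1 ι A) :=
  Submodule.span A
    {v | ∃ i j, v = x i • Finsupp.single j (1 : A) - x j • Finsupp.single i (1 : A)}

/-- The first Koszul homology module `H₁(x; A) = Z₁/B₁`. -/
def koszulH1 {A : Type} [CommRing A] {ι : Type} (x : ι → A) : Type :=
  ↥(koszulZ1 x) ⧸ (koszulB1 x).comap (koszulZ1 x).subtype

instance {A : Type} [CommRing A] {ι : Type} (x : ι → A) : AddCommGroup (koszulH1 x) :=
  inferInstanceAs (AddCommGroup (↥(koszulZ1 x) ⧸ (koszulB1 x).comap (koszulZ1 x).subtype))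

instance {A : Type} [CommRing A] {ι : Type} (x : ι → A) : Module A (koszulH1 x) :=
  inferInstanceAs (Module A (↥(koszulZ1 x) ⧸ (koszulB1 x).comap (koszulZ1 x).subtype))

/-- `H₁(x; A)` is a free `A⧸a`-module.  Since `H₁` carries an `A`-module structure and
`A⧸a`-scalar multiplication is induced by the `A`-one, an `A`-linear isomorphism with a module
`ι' →₀ A⧸a` of the form "direct sum of copies of `A⧸a`" expresses exactly freeness over `A⧸a`. -/
def KoszulH1FreeOver {A : Type} [CommRing A] {ι : Type} (x : ι → A) (a : Ideal A) : Prop :=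
  ∃ ι' : Type, Nonempty (koszulH1 x ≃ₗ[A] (ι' →₀ A ⧸ a))

namespace KoszulAux

variable {A : Type} [CommRing A]

/-- The generators of `koszulB1`, as a family. -/
def kgF {ι : Type} (x : ι → A) (p : ι × ι) : ι →₀ A :=
  x p.1 • Finsupp.single p.2 (1 : A) - x p.2 • Finsupp.single p.1 (1 : A)

lemma sum_kg_apply {ι : Type} [Fintype ι] [DecidableEq ι] (x : ι → A)
    (c : ι × ι → A) (a : ι) :
    (∑ p, c p • kgF x p) a
      = ∑ i, c (i, a) * x i - ∑ j, c (a, j) * x j := by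
  rw [Finsupp.finset_sum_apply]
  simp only [kgF, Finsupp.smul_apply, Finsupp.sub_apply, Finsupp.single_apply, smul_eq_mul,
    mul_ite, mul_one, mul_zero, mul_sub]
  rw [Fintype.sum_prod_type]
  simp only [Finset.sum_sub_distrib]
  congr 1
  · simp [Finset.sum_ite_eq']
  · rw [Finset.sum_comm]
    simp [Finset.sum_ite_eq']

lemma lc_eq_sum {ι : Type} [Fintype ι] (v : ι → A) (f : ι →₀ A) :
    Finsupp.linearCombination A v f = ∑ i, f i * v i := by
  rw [Finsupp.linearCombination_apply, Finsupp.sum_fintype]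
  · simp [smul_eq_mul]
  · intro i; simp

lemma koszulD1_eq {ι : Type} (x : ι → A) (f : ι →₀ A) :
    koszulD1 x f = Finsupp.linearCombination A x f := rfl

lemma mem_koszulB1_iff {ι : Type} [Fintype ι] (x : ι → A) (v : ι →₀ A) :
    v ∈ koszulB1 x ↔ ∃ c : ι × ι → A, ∑ p, c p • kgF x p = v := by
  have h1 : koszulB1 x = Submodule.span A (Set.range fun p => (kgF x p : KE1 ι A)) := by
    unfold koszulB1
    congr 1
    ext w
    constructor
    · rintro ⟨i, j, rfl⟩; exact ⟨(i, j), rfl⟩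
    · rintro ⟨⟨i, j⟩, rfl⟩; exact ⟨i, j, rfl⟩
  rw [h1]
  exact Submodule.mem_span_range_iff_exists_fun (R := A) (M := KE1 ι A) (v := fun p => kgF x p) (x := v)

lemma mem_koszulZ1_iff {ι : Type} (x : ι → A) (v : ι →₀ A) :
    v ∈ koszulZ1 x ↔ Finsupp.linearCombination A x v = 0 := Iff.rfl

end KoszulAux

namespace KoszulAux
variable {A : Type} [CommRing A]

variable {n : ℕ}

/-- Step A: dropping the last element, cycles lie in boundaries plus `xₙ`-multiples of cycles. -/
lemma z1_le_sup (x : Fin (n + 1) → A) (hZB : koszulZ1 x ≤ koszulB1 x) :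
    koszulZ1 (x ∘ Fin.castSucc) ≤
      koszulB1 (x ∘ Fin.castSucc) ⊔
        (Ideal.span {x (Fin.last n)}) • koszulZ1 (x ∘ Fin.castSucc) := by
  intro zk hzk
  obtain ⟨z, rfl⟩ : ∃ z : Fin n →₀ A, (z : KE1 (Fin n) A) = zk := ⟨zk, rfl⟩
  replace hzk := (mem_koszulZ1_iff _ z).mp hzk
  have hz := hzk
  set y := x (Fin.last n) with hy
  -- extend z by zero
  set zh : Fin (n + 1) →₀ A := Finsupp.mapDomain Fin.castSucc z with hzh
  have hzhZ : (zh : KE1 (Fin (n+1)) A) ∈ koszulZ1 x := by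
    apply (mem_koszulZ1_iff _ _).mpr
    rw [hzh, Finsupp.linearCombination_mapDomain]
    exact hz
  obtain ⟨c, hc⟩ := (mem_koszulB1_iff x zh).mp (hZB hzhZ)
  -- the coefficient vector d
  set d : Fin n →₀ A := Finsupp.equivFunOnFinite.symm
    (fun i => c (i.castSucc, Fin.last n) - c (Fin.last n, i.castSucc)) with hd
  have hdapp : ∀ i, d i = c (i.castSucc, Fin.last n) - c (Fin.last n, i.castSucc) := by
    intro i; rw [hd]; rfl
  have hdZ : (d : KE1 (Fin n) A) ∈ koszulZ1 (x ∘ Fin.castSucc) := by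
    apply (mem_koszulZ1_iff _ _).mpr
    rw [lc_eq_sum]
    have h0 : zh (Fin.last n) = 0 := by
      rw [hzh]; exact Finsupp.mapDomain_notin_range _ _ (by simp [Fin.range_castSucc])
    rw [← hc, sum_kg_apply] at h0
    rw [Fin.sum_univ_castSucc] at h0
    rw [Fin.sum_univ_castSucc (f := fun j => c (Fin.last n, j) * x j)] at h0
    have : ∑ i : Fin n, d i * (x ∘ Fin.castSucc) i
        = (∑ i : Fin n, c (i.castSucc, Fin.last n) * x i.castSucc
            + c (Fin.last n, Fin.last n) * x (Fin.last n))
          - (∑ j : Fin n, c (Fin.last n, j.castSucc) * x j.castSucc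
            + c (Fin.last n, Fin.last n) * x (Fin.last n)) := by
      simp only [hdapp, Function.comp_apply, sub_mul]
      rw [Finset.sum_sub_distrib]
      ring
    rw [this, h0]
  -- the boundary part
  set c' : Fin n × Fin n → A := fun q => c (q.1.castSucc, q.2.castSucc) with hc'
  have hbB : (∑ q, c' q • kgF (x ∘ Fin.castSucc) q : KE1 (Fin n) A)
      ∈ koszulB1 (x ∘ Fin.castSucc) :=
    (mem_koszulB1_iff _ _).mpr ⟨c', rfl⟩
  -- the decomposition z = b + (-y) • d
  have hdecomp : z = (∑ q, c' q • kgF (x ∘ Fin.castSucc) q) + (-y) • d := by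
    apply Finsupp.ext
    intro k
    have h1 : zh k.castSucc = z k := Finsupp.mapDomain_apply (Fin.castSucc_injective n) _ _
    rw [← hc, sum_kg_apply] at h1
    rw [Fin.sum_univ_castSucc] at h1
    rw [Fin.sum_univ_castSucc (f := fun j => c (k.castSucc, j) * x j)] at h1
    rw [Finsupp.add_apply, Finsupp.smul_apply, sum_kg_apply, hdapp, ← h1]
    simp only [hc', Function.comp_apply, smul_eq_mul]
    have hne : ∀ i : Fin n, (i.castSucc : Fin (n+1)) ≠ Fin.last n := fun i =>
      (Fin.castSucc_lt_last i).ne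
    ring
  rw [hdecomp]
  refine Submodule.add_mem_sup hbB (Submodule.smul_mem_smul ?_ hdZ)
  exact Submodule.neg_mem _ (Ideal.subset_span rfl)

lemma z1_le_b1_pred [IsNoetherianRing A] [IsLocalRing A] (x : Fin (n + 1) → A)
    (hy : x (Fin.last n) ∈ IsLocalRing.maximalIdeal A)
    (hZB : koszulZ1 x ≤ koszulB1 x) :
    koszulZ1 (x ∘ Fin.castSucc) ≤ koszulB1 (x ∘ Fin.castSucc) := by
  haveI : IsNoetherian A (KE1 (Fin n) A) :=
    isNoetherian_of_linearEquiv
      (M := Fin n → A) ((Finsupp.linearEquivFunOnFinite A A (Fin n)).symm)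
  refine Submodule.le_of_le_smul_of_le_jacobson_bot (IsNoetherian.noetherian _) ?_
    (z1_le_sup x hZB)
  rw [Ideal.span_le]
  rintro r rfl
  exact IsLocalRing.maximalIdeal_le_jacobson ⊥ hy

lemma mem_span_pred (x : Fin (n + 1) → A) (hZB : koszulZ1 x ≤ koszulB1 x) (b : A)
    (hb : x (Fin.last n) * b ∈ Ideal.span (Set.range (x ∘ Fin.castSucc))) :
    b ∈ Ideal.span (Set.range (x ∘ Fin.castSucc)) := by
  rw [Ideal.mem_span_range_iff_exists_fun] at hb
  obtain ⟨a, ha⟩ := hb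
  set v : Fin (n + 1) →₀ A :=
    Finsupp.mapDomain Fin.castSucc (Finsupp.equivFunOnFinite.symm a)
      - b • Finsupp.single (Fin.last n) 1 with hv
  have hvZ : (v : KE1 (Fin (n + 1)) A) ∈ koszulZ1 x := by
    apply (mem_koszulZ1_iff _ _).mpr
    rw [hv, map_sub, map_smul, Finsupp.linearCombination_mapDomain,
      Finsupp.linearCombination_single, lc_eq_sum]
    have he : ∀ i, (Finsupp.equivFunOnFinite.symm a) i = a i := fun _ => rfl
    simp only [he]
    have ha' : ∑ i, a i * (x ∘ Fin.castSucc) i = x (Fin.last n) * b := by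
      simpa [smul_eq_mul] using ha
    rw [ha', smul_eq_mul, one_smul]
    ring
  obtain ⟨c, hc⟩ := (mem_koszulB1_iff x v).mp (hZB hvZ)
  have h1 : v (Fin.last n) = -b := by
    rw [hv, Finsupp.sub_apply, Finsupp.smul_apply,
      Finsupp.mapDomain_notin_range _ _ (by simp [Fin.range_castSucc]),
      Finsupp.single_eq_same]
    simp
  rw [← hc, sum_kg_apply, Fin.sum_univ_castSucc,
    Fin.sum_univ_castSucc (f := fun j => c (Fin.last n, j) * x j)] at h1
  have hbeq : b = ∑ j : Fin n,
      (c (Fin.last n, j.castSucc) - c (j.castSucc, Fin.last n)) * (x ∘ Fin.castSucc) j := by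
    simp only [Function.comp_apply, sub_mul, Finset.sum_sub_distrib]
    linear_combination h1
  rw [hbeq, Ideal.mem_span_range_iff_exists_fun]
  exact ⟨_, rfl⟩

end KoszulAux

namespace KoszulAux
variable {A : Type} [CommRing A]

lemma z1_le_b1_of_subsingleton {ι : Type} (x : ι → A)
    (h : Subsingleton ((↥(koszulZ1 x)) ⧸ (koszulB1 x).comap (koszulZ1 x).subtype)) :
    koszulZ1 x ≤ koszulB1 x := by
  rw [Submodule.Quotient.subsingleton_iff] at h
  intro z hz
  simpa using Submodule.eq_top_iff'.mp h ⟨z, hz⟩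

lemma ofList_ofFn_smul_top {n : ℕ} (x : Fin (n + 1) → A) :
    (Ideal.ofList (List.ofFn fun i : Fin n => x i.castSucc) • ⊤ : Submodule A A)
      = Ideal.span (Set.range (x ∘ Fin.castSucc)) := by
  rw [smul_eq_mul, ← Ideal.one_eq_top, mul_one]
  unfold Ideal.ofList
  congr 1
  ext r
  simp [List.mem_ofFn, Set.range, Function.comp]

lemma weaklyRegular_of_z1_le_b1 [IsNoetherianRing A] [IsLocalRing A] :
    ∀ {n : ℕ} (x : Fin n → A), (∀ i, x i ∈ IsLocalRing.maximalIdeal A) →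
      koszulZ1 x ≤ koszulB1 x → RingTheory.Sequence.IsWeaklyRegular A (List.ofFn x) := by
  intro n
  induction n with
  | zero =>
    intro x _ _
    rw [List.ofFn_zero]
    exact RingTheory.Sequence.IsWeaklyRegular.nil A A
  | succ n ih =>
    intro x hx hZB
    have hreg' := ih (x ∘ Fin.castSucc) (fun i => hx _) (z1_le_b1_pred x (hx _) hZB)
    rw [List.ofFn_succ', List.concat_eq_append,
      RingTheory.Sequence.isWeaklyRegular_append_iff]
    refine ⟨hreg', ?_⟩
    rw [RingTheory.Sequence.isWeaklyRegular_singleton_iff]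
    rw [ofList_ofFn_smul_top x]
    intro u v huv
    obtain ⟨ua, rfl⟩ := Submodule.Quotient.mk_surjective _ u
    obtain ⟨va, rfl⟩ := Submodule.Quotient.mk_surjective _ v
    dsimp only at huv
    rw [← Submodule.Quotient.mk_smul, ← Submodule.Quotient.mk_smul,
      Submodule.Quotient.eq] at huv
    rw [Submodule.Quotient.eq]
    have : x (Fin.last n) • ua - x (Fin.last n) • va = x (Fin.last n) * (ua - va) := by
      rw [smul_eq_mul, smul_eq_mul]; ring
    rw [this] at huv
    exact mem_span_pred x hZB _ huv

end KoszulAux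


/-- if `(A, m, k)` is a noetherian local ring, `x₁, …, xₙ ∈ m` generate the ideal
`a`, and the first Koszul homology `H₁(x₁, …, xₙ; A)` vanishes, then `x₁, …, xₙ` is an
`A`-regular sequence. -/
theorem regular_of_koszulH1_eq_zero {A : Type} [CommRing A] [IsNoetherianRing A]
    [IsLocalRing A] (a : Ideal A) {n : ℕ} (x : Fin n → A)
    (hx : ∀ i, x i ∈ IsLocalRing.maximalIdeal A) (hgen : Ideal.span (Set.range x) = a)
    (h1 : Subsingleton (koszulH1 x)) :
    RingTheory.Sequence.IsRegular A (List.ofFn x) := by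
  have hZB : koszulZ1 x ≤ koszulB1 x := KoszulAux.z1_le_b1_of_subsingleton x h1
  rw [IsLocalRing.isRegular_iff_isWeaklyRegular_of_subset_maximalIdeal]
  · exact KoszulAux.weaklyRegular_of_z1_le_b1 x hx hZB
  · intro r hr
    rw [List.mem_ofFn] at hr
    obtain ⟨i, rfl⟩ := hr
    exact hx i
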